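/- For all real x ≥ 1, the quantity 3 − (2x+6)·ln(1 + 3x/(x²+3x)) − ((2x+6)(x²+3x) − (x²+6x)(2x+3))/(x²+3x) is at most −27/((x+3)(2x+9)), and in particular is strictly negative. -/

import Mathlib

open Real Set

lemma aux_pade_log (u : ℝ) (hu : 0 ≤ u) : 2 * u ≤ (2 + u) * Real.log (1 + u) := by
  set g : ℝ → ℝ := fun u => (2 + u) * Real.log (1 + u) - 2 * u with hgdef
  have hderiv : ∀ v : ℝ, 0 ≤ v →
      HasDerivAt g (Real.log (1 + v) + (2 + v) * (1 / (1 + v)) - 2) v := by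
    intro v hv
    have h1 : (0:ℝ) < 1 + v := by linarith
    have hl : HasDerivAt (fun w : ℝ => Real.log (1 + w)) (1 / (1 + v)) v := by
      have := (Real.hasDerivAt_log (ne_of_gt h1)).comp v
        ((hasDerivAt_id v).const_add 1)
      simpa [one_div, Function.comp_def] using this
    have h2 : HasDerivAt (fun w : ℝ => 2 + w) 1 v := (hasDerivAt_id v).const_add 2
    have := (h2.mul hl).sub ((hasDerivAt_id v).const_mul 2)
    refine this.congr_deriv ?_
    ring
  have hmono : MonotoneOn g (Ici (0:ℝ)) := by
    apply monotoneOn_of_deriv_nonneg (convex_Ici 0)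
    · exact fun v hv => ((hderiv v hv).continuousAt).continuousWithinAt
    · intro v hv
      rw [interior_Ici] at hv
      exact ((hderiv v (le_of_lt hv)).differentiableAt).differentiableWithinAt
    · intro v hv
      rw [interior_Ici] at hv
      rw [(hderiv v (le_of_lt hv)).deriv]
      have h1 : (0:ℝ) < 1 + v := by linarith [(mem_Ioi.mp hv).le]
      -- log (1+v) ≥ 1 - 1/(1+v)
      have hlog : 1 - 1 / (1 + v) ≤ Real.log (1 + v) := by
        have := Real.log_le_sub_one_of_pos (x := 1 / (1 + v)) (by positivity)
        rw [Real.log_div one_ne_zero (ne_of_gt h1), Real.log_one] at this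
        linarith
      have : (2 + v) * (1 / (1 + v)) = 1 + 1 / (1 + v) := by
        field_simp
        ring
      rw [this]
      linarith
  have h0 : g 0 = 0 := by simp [hgdef]
  have := hmono (self_mem_Ici) (mem_Ici.mpr hu) hu
  rw [h0] at this
  simpa [hgdef] using this

theorem mu_derivative_bound (x : ℝ) (hx : 1 ≤ x) :
    3 - (2 * x + 6) * Real.log (1 + 3 * x / (x ^ 2 + 3 * x)) -
        ((2 * x + 6) * (x ^ 2 + 3 * x) - (x ^ 2 + 6 * x) * (2 * x + 3)) / (x ^ 2 + 3 * x)
      ≤ -27 / ((x + 3) * (2 * x + 9)) ∧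
    3 - (2 * x + 6) * Real.log (1 + 3 * x / (x ^ 2 + 3 * x)) -
        ((2 * x + 6) * (x ^ 2 + 3 * x) - (x ^ 2 + 6 * x) * (2 * x + 3)) / (x ^ 2 + 3 * x)
      < 0 := by
  have hx3 : (0:ℝ) < x + 3 := by linarith
  have hx0 : (0:ℝ) < x := by linarith
  have hden : (0:ℝ) < x ^ 2 + 3 * x := by nlinarith
  have h29 : (0:ℝ) < 2 * x + 9 := by linarith
  have harg : 1 + 3 * x / (x ^ 2 + 3 * x) = 1 + 3 / (x + 3) := by
    have h : 3 * x / (x ^ 2 + 3 * x) = 3 / (x + 3) := by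
      rw [div_eq_div_iff hden.ne' hx3.ne']; ring
    rw [h]
  have hfrac : ((2 * x + 6) * (x ^ 2 + 3 * x) - (x ^ 2 + 6 * x) * (2 * x + 3)) / (x ^ 2 + 3 * x)
      = -(3 * x) / (x + 3) := by
    rw [div_eq_div_iff hden.ne' hx3.ne']; ring
  set u : ℝ := 3 / (x + 3) with hu
  have hu0 : 0 ≤ u := by positivity
  have hkey := aux_pade_log u hu0
  have h2u : 2 + u = (2 * x + 9) / (x + 3) := by
    field_simp [hu]
    rw [hu]; field_simp; ring
  have hL : 6 / (2 * x + 9) ≤ Real.log (1 + u) := by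
    rw [div_le_iff₀ h29]
    have h6 : 2 * u * (x + 3) = 6 := by
      field_simp [hu]
      rw [hu]; field_simp; norm_num
    nlinarith [hkey, Real.log_nonneg (by linarith : (1:ℝ) ≤ 1 + u),
      mul_le_mul_of_nonneg_right hkey hx3.le]
  have hmul : (12 * x + 36) / (2 * x + 9) ≤ (2 * x + 6) * Real.log (1 + u) := by
    have h26 : (0:ℝ) < 2 * x + 6 := by linarith
    have := mul_le_mul_of_nonneg_left hL h26.le
    calc (12 * x + 36) / (2 * x + 9) = (2 * x + 6) * (6 / (2 * x + 9)) := by ring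
      _ ≤ _ := this
  have hfirst : 3 - (2 * x + 6) * Real.log (1 + 3 * x / (x ^ 2 + 3 * x)) -
        ((2 * x + 6) * (x ^ 2 + 3 * x) - (x ^ 2 + 6 * x) * (2 * x + 3)) / (x ^ 2 + 3 * x)
      ≤ -27 / ((x + 3) * (2 * x + 9)) := by
    rw [harg, hfrac]
    have heq : 3 - (12 * x + 36) / (2 * x + 9) - -(3 * x) / (x + 3)
        = -27 / ((x + 3) * (2 * x + 9)) := by
      field_simp
      ring
    linarith [hmul, heq.le, heq.ge]
  refine ⟨hfirst, lt_of_le_of_lt hfirst ?_⟩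
  have : (0:ℝ) < (x + 3) * (2 * x + 9) := by positivity
  simpa using div_neg_of_neg_of_pos (by norm_num : (-27:ℝ) < 0) this
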